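/- Let E be a q-uniformly smooth (1 < q ≤ 2) and 2-uniformly convex real Banach space, C a nonempty closed convex subset, and A ⊆ E × E* a monotone operator with D(A) ⊆ C ⊆ J⁻¹R(J + rA) for all r > 0. Fix r > 0 and let J_r x = (J + rA)⁻¹Jx for x ∈ C. Then for every R > 0 there is a constant L such that for all x, y ∈ C with ‖x‖ ≤ R and ‖y‖ ≤ R, ‖J_r x − J_r y‖ ≤ L‖x − y‖^{q−1}. -/

import Mathlib

open Set

/-- Modulus of smoothness of a normed space `E`. -/
noncomputable def smoothnessModulus (E : Type*) [NormedAddCommGroup E] [NormedSpace ℝ E]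
    (τ : ℝ) : ℝ :=
  sSup {t : ℝ | ∃ x y : E, ‖x‖ ≤ 1 ∧ ‖y‖ ≤ 1 ∧ t = (‖x + τ • y‖ + ‖x - τ • y‖) / 2 - 1}

/-- Modulus of convexity of a normed space `E`. -/
noncomputable def convexityModulus (E : Type*) [NormedAddCommGroup E] [NormedSpace ℝ E]
    (ε : ℝ) : ℝ :=
  sInf {t : ℝ | ∃ x y : E, ‖x‖ ≤ 1 ∧ ‖y‖ ≤ 1 ∧ ‖x - y‖ = ε ∧ t = 1 - ‖x + y‖ / 2}

namespace Stmt11Aux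

variable {E : Type*} [NormedAddCommGroup E] [NormedSpace ℝ E]

lemma apply_le (φ : E →L[ℝ] ℝ) (z : E) : φ z ≤ ‖φ‖ * ‖z‖ :=
  le_trans (le_abs_self _) (by simpa [Real.norm_eq_abs] using φ.le_opNorm z)

lemma exists_near_norm (φ : E →L[ℝ] ℝ) {η : ℝ} (hη : 0 < η) :
    ∃ x : E, ‖x‖ ≤ 1 ∧ ‖φ‖ - η ≤ φ x := by
  by_contra hcon
  push_neg at hcon
  have h0 : (0:ℝ) < ‖φ‖ - η := by simpa using hcon 0 (by simp)
  have hb : ∀ x : E, ‖φ x‖ ≤ (‖φ‖ - η) * ‖x‖ := by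
    intro x
    rcases eq_or_ne x 0 with rfl | hx
    · simp
    have hxp : 0 < ‖x‖ := norm_pos_iff.mpr hx
    have hnu : ‖(‖x‖⁻¹ • x)‖ ≤ 1 := by
      rw [norm_smul, Real.norm_eq_abs, abs_of_nonneg (by positivity),
        inv_mul_cancel₀ hxp.ne']
    have h1 := hcon (‖x‖⁻¹ • x) hnu
    have h2 := hcon (-(‖x‖⁻¹ • x)) (by rwa [norm_neg])
    rw [map_smul, smul_eq_mul] at h1
    rw [map_neg, map_smul, smul_eq_mul] at h2
    have e1 : ‖x‖ * (‖x‖⁻¹ * φ x) = φ x := by field_simp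
    have habs : |φ x| < (‖φ‖ - η) * ‖x‖ := by
      rw [abs_lt]
      constructor
      · nlinarith [mul_lt_mul_of_pos_left h2 hxp]
      · nlinarith [mul_lt_mul_of_pos_left h1 hxp]
    rw [Real.norm_eq_abs]
    exact habs.le
  have := ContinuousLinearMap.opNorm_le_bound φ h0.le hb
  linarith

/-- modulus bound: for unit vectors `u v`, `‖u+v‖ ≤ 2 - 2c‖u-v‖²`. -/
lemma unit_sum_le {c : ℝ} (hc : 0 < c)
    (h2 : ∀ ε ∈ Ioc (0:ℝ) 2, c * ε ^ 2 ≤ convexityModulus E ε)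
    {u v : E} (hu : ‖u‖ = 1) (hv : ‖v‖ = 1) :
    ‖u + v‖ ≤ 2 - 2 * c * ‖u - v‖ ^ 2 := by
  rcases eq_or_lt_of_le (norm_nonneg (u - v)) with h0 | hpos
  · rw [← h0]
    have := norm_add_le u v
    rw [hu, hv] at this
    linarith
  · set ε := ‖u - v‖ with hε
    have hε2 : ε ≤ 2 := by
      have := norm_sub_le u v
      rw [hu, hv] at this; linarith
    have hbdd : BddBelow {t : ℝ | ∃ x y : E, ‖x‖ ≤ 1 ∧ ‖y‖ ≤ 1 ∧ ‖x - y‖ = ε ∧ t = 1 - ‖x + y‖ / 2} := by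
      refine ⟨0, ?_⟩
      rintro t ⟨x, y, hx, hy, -, rfl⟩
      have := norm_add_le x y
      linarith
    have hmem : (1 - ‖u + v‖ / 2) ∈
        {t : ℝ | ∃ x y : E, ‖x‖ ≤ 1 ∧ ‖y‖ ≤ 1 ∧ ‖x - y‖ = ε ∧ t = 1 - ‖x + y‖ / 2} :=
      ⟨u, v, hu.le, hv.le, rfl, rfl⟩
    have hinf : convexityModulus E ε ≤ 1 - ‖u + v‖ / 2 := csInf_le hbdd hmem
    have hlower := h2 ε ⟨hpos, hε2⟩
    linarith

/-- decomposition bound `‖w ± z‖ ≤ ‖z‖ * ‖u ± v‖ + (‖w‖ - ‖z‖)` for normalized u, v -/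
lemma norm_add_decomp {F : Type*} [NormedAddCommGroup F] [NormedSpace ℝ F] {w z : F} (hz : 0 < ‖z‖) (hba : ‖z‖ ≤ ‖w‖) :
    ‖w + z‖ ≤ ‖z‖ * ‖(‖w‖⁻¹ • w) + (‖z‖⁻¹ • z)‖ + (‖w‖ - ‖z‖) := by
  have hw : 0 < ‖w‖ := lt_of_lt_of_le hz hba
  have hweq : ‖w‖ • (‖w‖⁻¹ • w) = w := by
    rw [smul_smul, mul_inv_cancel₀ hw.ne', one_smul]
  have hzeq : ‖z‖ • (‖z‖⁻¹ • z) = z := by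
    rw [smul_smul, mul_inv_cancel₀ hz.ne', one_smul]
  have hid : w + z = ‖z‖ • ((‖w‖⁻¹ • w) + (‖z‖⁻¹ • z)) + (‖w‖ - ‖z‖) • (‖w‖⁻¹ • w) := by
    rw [smul_add, sub_smul, hweq, hzeq]; abel
  rw [hid]
  refine le_trans (norm_add_le _ _) ?_
  rw [norm_smul, norm_smul, Real.norm_eq_abs, Real.norm_eq_abs,
    abs_of_nonneg hz.le, abs_of_nonneg (by linarith)]
  have hun : ‖(‖w‖⁻¹ • w)‖ = 1 := by
    rw [norm_smul, Real.norm_eq_abs, abs_of_nonneg (by positivity), inv_mul_cancel₀ hw.ne']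
  rw [hun, mul_one]

lemma norm_sub_decomp {F : Type*} [NormedAddCommGroup F] [NormedSpace ℝ F] {w z : F} (hz : 0 < ‖z‖) (hba : ‖z‖ ≤ ‖w‖) :
    ‖w - z‖ ≤ ‖z‖ * ‖(‖w‖⁻¹ • w) - (‖z‖⁻¹ • z)‖ + (‖w‖ - ‖z‖) := by
  have hw : 0 < ‖w‖ := lt_of_lt_of_le hz hba
  have hweq : ‖w‖ • (‖w‖⁻¹ • w) = w := by
    rw [smul_smul, mul_inv_cancel₀ hw.ne', one_smul]
  have hzeq : ‖z‖ • (‖z‖⁻¹ • z) = z := by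
    rw [smul_smul, mul_inv_cancel₀ hz.ne', one_smul]
  have hid : w - z = ‖z‖ • ((‖w‖⁻¹ • w) - (‖z‖⁻¹ • z)) + (‖w‖ - ‖z‖) • (‖w‖⁻¹ • w) := by
    rw [smul_sub, sub_smul, hweq, hzeq]; abel
  rw [hid]
  refine le_trans (norm_add_le _ _) ?_
  rw [norm_smul, norm_smul, Real.norm_eq_abs, Real.norm_eq_abs,
    abs_of_nonneg hz.le, abs_of_nonneg (by linarith)]
  have hun : ‖(‖w‖⁻¹ • w)‖ = 1 := by
    rw [norm_smul, Real.norm_eq_abs, abs_of_nonneg (by positivity), inv_mul_cancel₀ hw.ne']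
  rw [hun, mul_one]

/-- expansion of the monotonicity pairing -/
lemma pairing_expand (J : E → (E →L[ℝ] ℝ)) (x y : E) :
    (J x - J y) (x - y) = J x x + J y y - J x y - J y x := by
  simp only [ContinuousLinearMap.sub_apply, map_sub]
  ring

lemma pairing_sum (J : E → (E →L[ℝ] ℝ)) (x y : E) :
    (J x + J y) (x + y) = J x x + J y y + J x y + J y x := by
  simp only [ContinuousLinearMap.add_apply, map_add]
  ring

/-- Global strong monotonicity of the duality map in a 2-uniformly convex space. -/
lemma strong_mono (J : E → (E →L[ℝ] ℝ)) (hJ : ∀ x : E, J x x = ‖x‖ ^ 2)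
    (hJn : ∀ x : E, ‖J x‖ = ‖x‖) {c : ℝ} (hc : 0 < c)
    (h2 : ∀ ε ∈ Ioc (0:ℝ) 2, c * ε ^ 2 ≤ convexityModulus E ε)
    (x y : E) (hba : ‖y‖ ≤ ‖x‖) :
    min c (1/2) * ‖x - y‖ ^ 2 ≤ (J x - J y) (x - y) := by
  set μ := min c (1/2) with hμ
  have hμc : μ ≤ c := min_le_left _ _
  have hμh : μ ≤ 1/2 := min_le_right _ _
  have hμpos : 0 < μ := lt_min hc (by norm_num)
  set a := ‖x‖ with ha
  set b := ‖y‖ with hbdef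
  rcases eq_or_lt_of_le (norm_nonneg y) with h0 | hbpos
  · -- y = 0
    have hy0 : y = 0 := norm_eq_zero.mp h0.symm
    subst hy0
    have hJy : J 0 = 0 := by
      have : ‖J (0:E)‖ = 0 := by rw [hJn]; simp
      exact norm_eq_zero.mp this
    rw [pairing_expand, hJ x, hJy]
    simp only [ContinuousLinearMap.zero_apply, map_zero, sub_zero, norm_zero]
    nlinarith [sq_nonneg (‖x‖), norm_nonneg x]
  · -- 0 < b
    have hapos : 0 < a := lt_of_lt_of_le hbpos hba
    set u := a⁻¹ • x with hu
    set v := b⁻¹ • y with hv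
    have hun : ‖u‖ = 1 := by
      rw [hu, norm_smul, Real.norm_eq_abs, abs_of_nonneg (by positivity),
        inv_mul_cancel₀ hapos.ne']
    have hvn : ‖v‖ = 1 := by
      rw [hv, norm_smul, Real.norm_eq_abs, abs_of_nonneg (by positivity),
        inv_mul_cancel₀ hbpos.ne']
    set ε := ‖u - v‖ with hεdef
    have hεnn : 0 ≤ ε := norm_nonneg _
    have hconv : ‖u + v‖ ≤ 2 - 2 * c * ε ^ 2 := unit_sum_le hc h2 hun hvn
    have hsum : ‖x + y‖ ≤ a + b - 2 * c * b * ε ^ 2 := by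
      have := norm_add_decomp hbpos hba
      rw [← hu, ← hv] at this
      have h2' : b * ‖u + v‖ ≤ b * (2 - 2 * c * ε ^ 2) :=
        mul_le_mul_of_nonneg_left hconv hbpos.le
      calc ‖x + y‖ ≤ b * ‖u + v‖ + (a - b) := this
        _ ≤ b * (2 - 2 * c * ε ^ 2) + (a - b) := by linarith
        _ = a + b - 2 * c * b * ε ^ 2 := by ring
    have hdiff : ‖x - y‖ ≤ b * ε + (a - b) := by
      have := norm_sub_decomp hbpos hba
      rw [← hu, ← hv] at this
      linarith [this]
    have hJsum : ‖J x + J y‖ ≤ a + b := by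
      calc ‖J x + J y‖ ≤ ‖J x‖ + ‖J y‖ := norm_add_le _ _
        _ = a + b := by rw [hJn, hJn]
    -- cross term bound
    have h1 : (J x + J y) (x + y) ≤ ‖J x + J y‖ * ‖x + y‖ := apply_le _ _
    have hxyn : 0 ≤ ‖x + y‖ := norm_nonneg _
    have h2' : ‖J x + J y‖ * ‖x + y‖ ≤ (a + b) * (a + b - 2 * c * b * ε ^ 2) :=
      mul_le_mul hJsum hsum hxyn (by positivity)
    have h3 := pairing_sum J x y
    rw [hJ x, hJ y] at h3
    have hcross : J x y + J y x ≤ (a + b) * (a + b - 2 * c * b * ε ^ 2) - a ^ 2 - b ^ 2 := by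
      rw [h3] at h1; linarith
    have hP : (J x - J y) (x - y) ≥ (a - b) ^ 2 + 2 * c * b * (a + b) * ε ^ 2 := by
      rw [pairing_expand, hJ x, hJ y]
      nlinarith [hcross]
    have hs2 : ‖x - y‖ ^ 2 ≤ (b * ε + (a - b)) ^ 2 := by
      have h0 : (0:ℝ) ≤ ‖x - y‖ := norm_nonneg _
      nlinarith [hdiff]
    clear_value μ a b u v ε
    have hbposb : 0 < b := by rw [hbdef]; exact hbpos
    -- final assembly
    have e1 : μ * ‖x - y‖ ^ 2 ≤ μ * (b * ε + (a - b)) ^ 2 := mul_le_mul_of_nonneg_left hs2 hμpos.le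
    have e2 : μ * (b * ε + (a - b)) ^ 2 ≤ 2 * μ * (b * ε) ^ 2 + 2 * μ * (a - b) ^ 2 := by
      have key : 2 * μ * (b * ε) ^ 2 + 2 * μ * (a - b) ^ 2 - μ * (b * ε + (a - b)) ^ 2
          = μ * (b * ε - (a - b)) ^ 2 := by ring
      linarith [mul_nonneg hμpos.le (sq_nonneg (b * ε - (a - b)))]
    have e3 : 2 * μ * (b * ε) ^ 2 ≤ 2 * c * (b * ε) ^ 2 := by
      have key : 2 * c * (b * ε) ^ 2 - 2 * μ * (b * ε) ^ 2 = 2 * ((c - μ) * (b * ε) ^ 2) := by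
        ring
      linarith [mul_nonneg (sub_nonneg.mpr hμc) (sq_nonneg (b * ε))]
    have e4 : 2 * c * (b * ε) ^ 2 ≤ 2 * c * b * (a + b) * ε ^ 2 := by
      have key : 2 * c * b * (a + b) * ε ^ 2 - 2 * c * (b * ε) ^ 2
          = 2 * (c * (a * b) * ε ^ 2) := by ring
      linarith [mul_nonneg (mul_nonneg hc.le (mul_nonneg hapos.le hbposb.le)) (sq_nonneg ε)]
    have e5 : 2 * μ * (a - b) ^ 2 ≤ (a - b) ^ 2 := by
      have key : (a - b) ^ 2 - 2 * μ * (a - b) ^ 2 = (1 - 2 * μ) * (a - b) ^ 2 := by ring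
      have h12 : (0:ℝ) ≤ 1 - 2 * μ := by linarith
      linarith [mul_nonneg h12 (sq_nonneg (a - b))]
    linarith [hP]

/-- Lindenstrauss-type estimate: uniform convexity of the dual ball. -/
lemma dual_conv {K q : ℝ} (hK : 0 < K) (hq1 : 1 < q)
    (hρ : ∀ τ > (0:ℝ), smoothnessModulus E τ ≤ K * τ ^ q)
    (f g : E →L[ℝ] ℝ) (hf : ‖f‖ ≤ 1) (hg : ‖g‖ ≤ 1) :
    ‖f + g‖ ≤ 2 - ((4 * K) ^ (1 / (q - 1)))⁻¹ / 2 * ‖f - g‖ ^ (q / (q - 1)) := by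
  have hq0 : (0:ℝ) < q - 1 := by linarith
  rcases eq_or_lt_of_le (norm_nonneg (f - g)) with h0 | hεpos
  · rw [← h0, Real.zero_rpow (by positivity), mul_zero, sub_zero]
    linarith [norm_add_le f g]
  · set ε := ‖f - g‖ with hεdef
    set τ := (ε / (4 * K)) ^ (1 / (q - 1)) with hτdef
    have hτpos : 0 < τ := Real.rpow_pos_of_pos (by positivity) _
    have hτq1 : τ ^ (q - 1) = ε / (4 * K) := by
      rw [hτdef, ← Real.rpow_mul (by positivity : (0:ℝ) ≤ ε / (4 * K))]
      rw [show 1 / (q - 1) * (q - 1) = 1 by field_simp]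
      exact Real.rpow_one _
    have hrw : τ * ε / 2 = ((4 * K) ^ (1 / (q - 1)))⁻¹ / 2 * ε ^ (q / (q - 1)) := by
      have hdiv : τ = ε ^ (1 / (q - 1)) / (4 * K) ^ (1 / (q - 1)) := by
        rw [hτdef, Real.div_rpow (by positivity) (by positivity)]
      have hεq : ε ^ (1 / (q - 1)) * ε = ε ^ (q / (q - 1)) := by
        nth_rewrite 2 [show ε = ε ^ (1:ℝ) from (Real.rpow_one ε).symm]
        rw [← Real.rpow_add hεpos]
        congr 1
        field_simp
        ring
      rw [hdiv]
      field_simp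
      rw [mul_comm (ε ^ (1 / (q - 1))) ε, ← hεq]
      ring
    clear_value τ ε
    have hKτq : 2 * (K * τ ^ q) = τ * ε / 2 := by
      have hq' : τ ^ q = τ * τ ^ (q - 1) := by
        rw [show q = 1 + (q - 1) by ring, Real.rpow_add hτpos, Real.rpow_one]
        ring_nf
      rw [hq', hτq1]
      have hKne : (K:ℝ) ≠ 0 := hK.ne'
      field_simp
      ring
    have hmain : ∀ η : ℝ, 0 < η → ‖f + g‖ + τ * ε ≤ 2 + 2 * (K * τ ^ q) + (1 + τ) * η := by
      intro η hη
      obtain ⟨x, hx1, hx2⟩ := exists_near_norm (f + g) hη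
      obtain ⟨y, hy1, hy2⟩ := exists_near_norm (f - g) hη
      have e1 : (f + g) x + τ * ((f - g) y) = f (x + τ • y) + g (x - τ • y) := by
        simp only [ContinuousLinearMap.add_apply, ContinuousLinearMap.sub_apply,
          map_add, map_sub, map_smul, smul_eq_mul]
        ring
      have e2 : f (x + τ • y) ≤ ‖x + τ • y‖ :=
        (apply_le f _).trans (mul_le_of_le_one_left (norm_nonneg _) hf)
      have e3 : g (x - τ • y) ≤ ‖x - τ • y‖ :=
        (apply_le g _).trans (mul_le_of_le_one_left (norm_nonneg _) hg)
      have hmem : (‖x + τ • y‖ + ‖x - τ • y‖) / 2 - 1 ∈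
          {t : ℝ | ∃ x y : E, ‖x‖ ≤ 1 ∧ ‖y‖ ≤ 1 ∧ t = (‖x + τ • y‖ + ‖x - τ • y‖) / 2 - 1} :=
        ⟨x, y, hx1, hy1, rfl⟩
      have hbdd : BddAbove
          {t : ℝ | ∃ x y : E, ‖x‖ ≤ 1 ∧ ‖y‖ ≤ 1 ∧ t = (‖x + τ • y‖ + ‖x - τ • y‖) / 2 - 1} := by
        refine ⟨τ, ?_⟩
        rintro t ⟨x', y', hx', hy', rfl⟩
        have l1 : ‖x' + τ • y'‖ ≤ 1 + τ := by
          have := norm_add_le x' (τ • y')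
          have hs : ‖τ • y'‖ ≤ τ := by
            rw [norm_smul, Real.norm_eq_abs, abs_of_nonneg hτpos.le]
            exact mul_le_of_le_one_right hτpos.le hy'
          linarith
        have l2 : ‖x' - τ • y'‖ ≤ 1 + τ := by
          have := norm_sub_le x' (τ • y')
          have hs : ‖τ • y'‖ ≤ τ := by
            rw [norm_smul, Real.norm_eq_abs, abs_of_nonneg hτpos.le]
            exact mul_le_of_le_one_right hτpos.le hy'
          linarith
        linarith
      have hsup := le_trans (le_csSup hbdd hmem) (hρ τ hτpos)
      have ht2 : τ * (ε - η) ≤ τ * ((f - g) y) := mul_le_mul_of_nonneg_left (by linarith) hτpos.le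
      have hx2' : ‖f + g‖ - η ≤ (f + g) x := hx2
      linarith [e1, e2, e3, hsup, ht2, hx2']
    have hfin : ‖f + g‖ ≤ 2 - τ * ε / 2 := by
      have h1τ : (0:ℝ) < 1 + τ := by linarith
      refine le_of_forall_pos_le_add ?_
      intro η' hη'
      have := hmain (η' / (1 + τ)) (by positivity)
      rw [mul_div_cancel₀ _ h1τ.ne'] at this
      linarith [hKτq]
    linarith [hrw.le, hrw.ge, hfin]
/-- power split: for `0 ≤ t ≤ M` and `p ≥ 2`, `t^p ≤ t² M^(p-2)`. -/
lemma rpow_split {t M p : ℝ} (ht : 0 ≤ t) (htM : t ≤ M) (hp : 2 ≤ p) :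
    t ^ p ≤ t ^ 2 * M ^ (p - 2) := by
  rcases eq_or_lt_of_le ht with h0 | htpos
  · rw [← h0, Real.zero_rpow (by linarith)]
    norm_num
  · have h1 : t ^ p = t ^ (2:ℝ) * t ^ (p - 2) := by
      rw [← Real.rpow_add htpos]; ring_nf
    have h2 : t ^ (p - 2) ≤ M ^ (p - 2) :=
      Real.rpow_le_rpow htpos.le htM (by linarith)
    have h3 : t ^ (2:ℝ) = t ^ (2:ℕ) := by
      rw [← Real.rpow_natCast t 2]; norm_num
    rw [h1, h3]
    exact mul_le_mul_of_nonneg_left h2 (by positivity)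

/-- `(s+t)^p ≤ 2^p (s^p + t^p)` for nonneg `s t`, `p ≥ 0`. -/
lemma rpow_add_le {s t p : ℝ} (hs : 0 ≤ s) (ht : 0 ≤ t) (hp : 0 ≤ p) :
    (s + t) ^ p ≤ 2 ^ p * (s ^ p + t ^ p) := by
  have hmax : 0 ≤ max s t := le_max_of_le_left hs
  have h1 : s + t ≤ 2 * max s t := by
    rcases max_cases s t with ⟨hm, hst⟩ | ⟨hm, hst⟩ <;> rw [hm] <;> linarith
  have h2 : (s + t) ^ p ≤ (2 * max s t) ^ p :=
    Real.rpow_le_rpow (by linarith) h1 hp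
  have h3 : (2 * max s t) ^ p = 2 ^ p * (max s t) ^ p :=
    Real.mul_rpow (by norm_num) hmax
  have h4 : (max s t) ^ p ≤ s ^ p + t ^ p := by
    rcases max_cases s t with ⟨hm, hst⟩ | ⟨hm, hst⟩ <;> rw [hm]
    · exact le_add_of_nonneg_right (Real.rpow_nonneg ht p)
    · exact le_add_of_nonneg_left (Real.rpow_nonneg hs p)
  calc (s + t) ^ p ≤ 2 ^ p * (max s t) ^ p := by rw [← h3]; exact h2
    _ ≤ 2 ^ p * (s ^ p + t ^ p) :=
      mul_le_mul_of_nonneg_left h4 (Real.rpow_nonneg (by norm_num) p)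

/-- core dual estimate: `κ ‖Jx - Jy‖^p ≤ ⟨Jx - Jy, x - y⟩ ‖x‖^(p-2)`. -/
lemma core_dual (J : E → (E →L[ℝ] ℝ)) (hJ : ∀ x : E, J x x = ‖x‖ ^ 2)
    (hJn : ∀ x : E, ‖J x‖ = ‖x‖) {K q : ℝ} (hK : 0 < K) (hq1 : 1 < q) (hq2 : q ≤ 2)
    (hρ : ∀ τ > (0:ℝ), smoothnessModulus E τ ≤ K * τ ^ q)
    (x y : E) (hba : ‖y‖ ≤ ‖x‖) :
    min (((4 * K) ^ (1 / (q - 1)))⁻¹ / 2) 1 / 2 ^ (q / (q - 1)) * ‖J x - J y‖ ^ (q / (q - 1))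
      ≤ (J x - J y) (x - y) * ‖x‖ ^ (q / (q - 1) - 2) := by
  have hq0 : (0:ℝ) < q - 1 := by linarith
  set c2 := ((4 * K) ^ (1 / (q - 1)))⁻¹ / 2 with hc2def
  set p := q / (q - 1) with hpdef
  have hc2pos : 0 < c2 := by
    rw [hc2def]
    have := Real.rpow_pos_of_pos (show (0:ℝ) < 4 * K by linarith) (1 / (q - 1))
    positivity
  have hp2 : 2 ≤ p := by
    rw [hpdef, le_div_iff₀ hq0]; linarith
  have hppos : 0 < p := by linarith
  have h2p1 : (1:ℝ) ≤ 2 ^ p := Real.one_le_rpow (by norm_num) hppos.le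
  have h2ppos : (0:ℝ) < 2 ^ p := Real.rpow_pos_of_pos (by norm_num) p
  set κ := min c2 1 / 2 ^ p with hκdef
  have hκpos : 0 < κ := by
    rw [hκdef]
    exact div_pos (lt_min hc2pos one_pos) h2ppos
  have hκ1 : κ ≤ 1 := by
    rw [hκdef]
    calc min c2 1 / 2 ^ p ≤ 1 / 1 :=
      div_le_div₀ (by norm_num) (min_le_right _ _) one_pos h2p1
    _ = 1 := by norm_num
  clear_value c2 p κ
  rcases eq_or_lt_of_le (norm_nonneg x) with ha0 | hapos
  · -- x = 0, hence y = 0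
    have hx0 : x = 0 := norm_eq_zero.mp ha0.symm
    have hy0 : y = 0 := norm_eq_zero.mp (le_antisymm (by rw [hx0] at hba; simpa using hba)
      (norm_nonneg y))
    subst hx0; subst hy0
    simp only [sub_self, norm_zero, ContinuousLinearMap.zero_apply, map_zero]
    rw [Real.zero_rpow hppos.ne']
    simp
  · rcases eq_or_lt_of_le (norm_nonneg y) with hb0 | hbpos
    · -- y = 0
      have hy0 : y = 0 := norm_eq_zero.mp hb0.symm
      subst hy0
      have hJy : J (0:E) = 0 := norm_eq_zero.mp (by rw [hJn]; simp)
      rw [hJy, sub_zero, sub_zero, hJn, hJ]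
      have hkey : ‖x‖ ^ (2:ℕ) * ‖x‖ ^ (p - 2) = ‖x‖ ^ p := by
        rw [← Real.rpow_natCast ‖x‖ 2, ← Real.rpow_add hapos]
        norm_num
      rw [hkey]
      exact mul_le_of_le_one_left (Real.rpow_nonneg (norm_nonneg x) p) hκ1
    · -- main case: both nonzero
      have hJxn : ‖J x‖ = ‖x‖ := hJn x
      have hJyn : ‖J y‖ = ‖y‖ := hJn y
      have hJypos : 0 < ‖J y‖ := by rw [hJyn]; exact hbpos
      have hJba : ‖J y‖ ≤ ‖J x‖ := by rw [hJyn, hJxn]; exact hba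
      set ε := ‖(‖J x‖⁻¹ • J x) - (‖J y‖⁻¹ • J y)‖ with hεdef
      have hεnn : 0 ≤ ε := norm_nonneg _
      have hJxpos : 0 < ‖J x‖ := by rw [hJxn]; exact hapos
      have hu1 : ‖(‖J x‖⁻¹ • J x)‖ ≤ 1 := by
        have hns := norm_smul (‖J x‖⁻¹) (J x)
        rw [hns, Real.norm_eq_abs, abs_of_nonneg (by positivity),
          inv_mul_cancel₀ hJxpos.ne']
      have hv1 : ‖(‖J y‖⁻¹ • J y)‖ ≤ 1 := by
        have hns := norm_smul (‖J y‖⁻¹) (J y)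
        rw [hns, Real.norm_eq_abs, abs_of_nonneg (by positivity),
          inv_mul_cancel₀ hJypos.ne']
      have hconv := dual_conv hK hq1 hρ _ _ hu1 hv1
      rw [← hεdef, ← hc2def, ← hpdef] at hconv
      have hsum : ‖J x + J y‖ ≤ ‖x‖ + ‖y‖ - ‖y‖ * (c2 * ε ^ p) := by
        have hd := norm_add_decomp hJypos hJba
        set W := ‖(‖J x‖⁻¹ • J x) + (‖J y‖⁻¹ • J y)‖ with hWdef
        have h2' : ‖y‖ * W ≤ ‖y‖ * (2 - c2 * ε ^ p) :=
          mul_le_mul_of_nonneg_left hconv hbpos.le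
        have hexp : ‖y‖ * (2 - c2 * ε ^ p) = 2 * ‖y‖ - ‖y‖ * (c2 * ε ^ p) := by ring
        rw [hJxn, hJyn] at hd
        linarith
      have hDle : ‖J x - J y‖ ≤ ‖y‖ * ε + (‖x‖ - ‖y‖) := by
        have hd := norm_sub_decomp hJypos hJba
        rw [← hεdef] at hd
        rw [hJxn, hJyn] at hd
        linarith
      -- pairing lower bound
      have h1 : (J x + J y) (x + y) ≤ ‖J x + J y‖ * ‖x + y‖ := apply_le _ _
      have hxy : ‖x + y‖ ≤ ‖x‖ + ‖y‖ := norm_add_le _ _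
      have h2 : ‖J x + J y‖ * ‖x + y‖
          ≤ (‖x‖ + ‖y‖ - ‖y‖ * (c2 * ε ^ p)) * (‖x‖ + ‖y‖) :=
        mul_le_mul hsum hxy (norm_nonneg _) (le_trans (norm_nonneg _) hsum)
      have h3 := pairing_sum J x y
      rw [hJ x, hJ y] at h3
      have hεp : (0:ℝ) ≤ ε ^ p := Real.rpow_nonneg hεnn p
      have hP : (‖x‖ - ‖y‖) ^ 2 + c2 * ‖y‖ ^ 2 * ε ^ p ≤ (J x - J y) (x - y) := by
        rw [pairing_expand, hJ x, hJ y]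
        have hcross : J x y + J y x
            ≤ (‖x‖ + ‖y‖ - ‖y‖ * (c2 * ε ^ p)) * (‖x‖ + ‖y‖) - ‖x‖ ^ 2 - ‖y‖ ^ 2 := by
          rw [h3] at h1
          linarith
        nlinarith [hcross, mul_nonneg (mul_nonneg hc2pos.le
          (mul_nonneg hapos.le hbpos.le)) hεp]
      -- rpow chain
      have hdnn : (0:ℝ) ≤ ‖x‖ - ‖y‖ := by linarith
      have hbεnn : (0:ℝ) ≤ ‖y‖ * ε := mul_nonneg hbpos.le hεnn
      have c1 : ‖J x - J y‖ ^ p ≤ (‖y‖ * ε + (‖x‖ - ‖y‖)) ^ p :=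
        Real.rpow_le_rpow (norm_nonneg _) hDle hppos.le
      have c2' : (‖y‖ * ε + (‖x‖ - ‖y‖)) ^ p
          ≤ 2 ^ p * ((‖y‖ * ε) ^ p + (‖x‖ - ‖y‖) ^ p) := rpow_add_le hbεnn hdnn hppos.le
      have c3 : (‖y‖ * ε) ^ p = ‖y‖ ^ p * ε ^ p := Real.mul_rpow hbpos.le hεnn
      have c4 : ‖y‖ ^ p ≤ ‖y‖ ^ 2 * ‖x‖ ^ (p - 2) := rpow_split hbpos.le hba hp2
      have c5 : (‖x‖ - ‖y‖) ^ p ≤ (‖x‖ - ‖y‖) ^ 2 * ‖x‖ ^ (p - 2) :=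
        rpow_split hdnn (by linarith [norm_nonneg y]) hp2
      have hAnn : (0:ℝ) ≤ ‖x‖ ^ (p - 2) := Real.rpow_nonneg hapos.le _
      -- assemble
      have e1 : κ * ‖J x - J y‖ ^ p ≤ κ * (2 ^ p * ((‖y‖ * ε) ^ p + (‖x‖ - ‖y‖) ^ p)) :=
        mul_le_mul_of_nonneg_left (c1.trans c2') hκpos.le
      have e2 : κ * (2 ^ p * ((‖y‖ * ε) ^ p + (‖x‖ - ‖y‖) ^ p))
          = min c2 1 * ((‖y‖ * ε) ^ p + (‖x‖ - ‖y‖) ^ p) := by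
        rw [hκdef]
        field_simp
      have hminnn : (0:ℝ) ≤ min c2 1 := le_min hc2pos.le zero_le_one
      have e3 : (‖y‖ * ε) ^ p ≤ ‖y‖ ^ 2 * ‖x‖ ^ (p - 2) * ε ^ p := by
        rw [c3]
        exact mul_le_mul_of_nonneg_right c4 hεp
      have e5 : min c2 1 * ((‖y‖ * ε) ^ p + (‖x‖ - ‖y‖) ^ p)
          ≤ c2 * (‖y‖ ^ 2 * ‖x‖ ^ (p - 2) * ε ^ p) + (‖x‖ - ‖y‖) ^ 2 * ‖x‖ ^ (p - 2) := by
        have m1 : min c2 1 * ((‖y‖ * ε) ^ p) ≤ min c2 1 * (‖y‖ ^ 2 * ‖x‖ ^ (p - 2) * ε ^ p) :=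
          mul_le_mul_of_nonneg_left e3 hminnn
        have m2 : min c2 1 * (‖y‖ ^ 2 * ‖x‖ ^ (p - 2) * ε ^ p)
            ≤ c2 * (‖y‖ ^ 2 * ‖x‖ ^ (p - 2) * ε ^ p) :=
          mul_le_mul_of_nonneg_right (min_le_left _ _)
            (mul_nonneg (mul_nonneg (sq_nonneg _) hAnn) hεp)
        have m3 : min c2 1 * ((‖x‖ - ‖y‖) ^ p) ≤ (‖x‖ - ‖y‖) ^ 2 * ‖x‖ ^ (p - 2) := by
          calc min c2 1 * ((‖x‖ - ‖y‖) ^ p) ≤ 1 * ((‖x‖ - ‖y‖) ^ p) :=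
            mul_le_mul_of_nonneg_right (min_le_right _ _) (Real.rpow_nonneg hdnn p)
          _ = (‖x‖ - ‖y‖) ^ p := one_mul _
          _ ≤ (‖x‖ - ‖y‖) ^ 2 * ‖x‖ ^ (p - 2) := c5
        linarith [m1, m2, m3]
      have e6 : c2 * (‖y‖ ^ 2 * ‖x‖ ^ (p - 2) * ε ^ p) + (‖x‖ - ‖y‖) ^ 2 * ‖x‖ ^ (p - 2)
          ≤ (J x - J y) (x - y) * ‖x‖ ^ (p - 2) := by
        have hkey := mul_le_mul_of_nonneg_right hP hAnn
        have hbr : ((‖x‖ - ‖y‖) ^ 2 + c2 * ‖y‖ ^ 2 * ε ^ p) * ‖x‖ ^ (p - 2)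
            = c2 * (‖y‖ ^ 2 * ‖x‖ ^ (p - 2) * ε ^ p) + (‖x‖ - ‖y‖) ^ 2 * ‖x‖ ^ (p - 2) := by
          ring
        linarith [hkey]
      linarith [e1, e2.le, e2.ge, e5, e6]

/-- symmetric version of strong monotonicity -/
lemma strong_mono' (J : E → (E →L[ℝ] ℝ)) (hJ : ∀ x : E, J x x = ‖x‖ ^ 2)
    (hJn : ∀ x : E, ‖J x‖ = ‖x‖) {c : ℝ} (hc : 0 < c)
    (h2 : ∀ ε ∈ Ioc (0:ℝ) 2, c * ε ^ 2 ≤ convexityModulus E ε)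
    (x y : E) : min c (1/2) * ‖x - y‖ ^ 2 ≤ (J x - J y) (x - y) := by
  rcases le_total ‖y‖ ‖x‖ with hba | hba
  · exact strong_mono J hJ hJn hc h2 x y hba
  · have hs := strong_mono J hJ hJn hc h2 y x hba
    have h1 : (J y - J x) (y - x) = (J x - J y) (x - y) := by
      simp only [ContinuousLinearMap.sub_apply, map_sub]
      ring
    rw [h1, norm_sub_rev y x] at hs
    exact hs

lemma pairing_nonneg (J : E → (E →L[ℝ] ℝ)) (hJ : ∀ x : E, J x x = ‖x‖ ^ 2)
    (hJn : ∀ x : E, ‖J x‖ = ‖x‖) (x y : E) : 0 ≤ (J x - J y) (x - y) := by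
  rw [pairing_expand J x y, hJ, hJ]
  have h1 : J x y ≤ ‖x‖ * ‖y‖ := by
    have := apply_le (J x) y; rwa [hJn] at this
  have h2 : J y x ≤ ‖y‖ * ‖x‖ := by
    have := apply_le (J y) x; rwa [hJn] at this
  nlinarith [sq_nonneg (‖x‖ - ‖y‖)]

lemma j_holder_aux (J : E → (E →L[ℝ] ℝ)) (hJ : ∀ x : E, J x x = ‖x‖ ^ 2)
    (hJn : ∀ x : E, ‖J x‖ = ‖x‖) {K q : ℝ} (hK : 0 < K) (hq1 : 1 < q) (hq2 : q ≤ 2)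
    (hρ : ∀ τ > (0:ℝ), smoothnessModulus E τ ≤ K * τ ^ q)
    {R : ℝ} (hR : 0 < R) (x y : E) (hx : ‖x‖ ≤ R) (hy : ‖y‖ ≤ R) (hba : ‖y‖ ≤ ‖x‖) :
    ‖J x - J y‖ ≤ (R ^ (q / (q - 1) - 2) /
        (min (((4 * K) ^ (1 / (q - 1)))⁻¹ / 2) 1 / 2 ^ (q / (q - 1)))) ^ (q - 1)
      * ‖x - y‖ ^ (q - 1) := by
  have hq0 : (0:ℝ) < q - 1 := by linarith
  set κ := min (((4 * K) ^ (1 / (q - 1)))⁻¹ / 2) 1 / 2 ^ (q / (q - 1)) with hκdef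
  set p := q / (q - 1) with hpdef
  have hc2pos : 0 < (((4 * K) ^ (1 / (q - 1)))⁻¹ / 2) := by
    have := Real.rpow_pos_of_pos (show (0:ℝ) < 4 * K by linarith) (1 / (q - 1))
    positivity
  have h2ppos : (0:ℝ) < 2 ^ p := Real.rpow_pos_of_pos (by norm_num) p
  have hκpos : 0 < κ := by
    rw [hκdef]
    exact div_pos (lt_min hc2pos one_pos) h2ppos
  have hp2 : 2 ≤ p := by
    rw [hpdef, le_div_iff₀ hq0]; linarith
  have hp21 : (p - 1) * (q - 1) = 1 := by
    rw [hpdef]; field_simp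
    ring
  have hRp : (0:ℝ) ≤ R ^ (p - 2) := Real.rpow_nonneg hR.le _
  have hCnn : (0:ℝ) ≤ R ^ (p - 2) / κ := div_nonneg hRp hκpos.le
  clear_value κ p
  have hcd := core_dual J hJ hJn hK hq1 hq2 hρ x y hba
  rw [← hpdef, ← hκdef] at hcd
  have hP0 : 0 ≤ (J x - J y) (x - y) := pairing_nonneg J hJ hJn x y
  have hRa : ‖x‖ ^ (p - 2) ≤ R ^ (p - 2) :=
    Real.rpow_le_rpow (norm_nonneg x) hx (by linarith)
  have hPD : (J x - J y) (x - y) ≤ ‖J x - J y‖ * ‖x - y‖ := apply_le _ _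
  have h2 : κ * ‖J x - J y‖ ^ p ≤ ‖J x - J y‖ * ‖x - y‖ * R ^ (p - 2) := by
    calc κ * ‖J x - J y‖ ^ p ≤ (J x - J y) (x - y) * ‖x‖ ^ (p - 2) := hcd
      _ ≤ (J x - J y) (x - y) * R ^ (p - 2) := mul_le_mul_of_nonneg_left hRa hP0
      _ ≤ ‖J x - J y‖ * ‖x - y‖ * R ^ (p - 2) := mul_le_mul_of_nonneg_right hPD hRp
  rcases eq_or_lt_of_le (norm_nonneg (J x - J y)) with hD0 | hDpos
  · rw [← hD0]
    exact mul_nonneg (Real.rpow_nonneg hCnn _) (Real.rpow_nonneg (norm_nonneg _) _)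
  · have hsplit : ‖J x - J y‖ ^ p = ‖J x - J y‖ * ‖J x - J y‖ ^ (p - 1) := by
      rw [show p = 1 + (p - 1) by ring, Real.rpow_add hDpos, Real.rpow_one]
      ring_nf
    have h3 : ‖J x - J y‖ * (κ * ‖J x - J y‖ ^ (p - 1))
        ≤ ‖J x - J y‖ * (‖x - y‖ * R ^ (p - 2)) := by
      rw [hsplit] at h2
      calc ‖J x - J y‖ * (κ * ‖J x - J y‖ ^ (p - 1))
          = κ * (‖J x - J y‖ * ‖J x - J y‖ ^ (p - 1)) := by ring
        _ ≤ ‖J x - J y‖ * ‖x - y‖ * R ^ (p - 2) := h2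
        _ = ‖J x - J y‖ * (‖x - y‖ * R ^ (p - 2)) := by ring
    have h4 : κ * ‖J x - J y‖ ^ (p - 1) ≤ ‖x - y‖ * R ^ (p - 2) :=
      le_of_mul_le_mul_left h3 hDpos
    have h5 : ‖J x - J y‖ ^ (p - 1) ≤ ‖x - y‖ * (R ^ (p - 2) / κ) := by
      have h4' := (le_div_iff₀' hκpos).mpr h4
      calc ‖J x - J y‖ ^ (p - 1) ≤ ‖x - y‖ * R ^ (p - 2) / κ := h4'
        _ = ‖x - y‖ * (R ^ (p - 2) / κ) := by ring
    have h6 : (‖J x - J y‖ ^ (p - 1)) ^ (q - 1)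
        ≤ (‖x - y‖ * (R ^ (p - 2) / κ)) ^ (q - 1) :=
      Real.rpow_le_rpow (Real.rpow_nonneg (norm_nonneg _) _) h5 (by linarith)
    have h7 : (‖J x - J y‖ ^ (p - 1)) ^ (q - 1) = ‖J x - J y‖ := by
      rw [← Real.rpow_mul (norm_nonneg _), hp21, Real.rpow_one]
    have h8 : (‖x - y‖ * (R ^ (p - 2) / κ)) ^ (q - 1)
        = (R ^ (p - 2) / κ) ^ (q - 1) * ‖x - y‖ ^ (q - 1) := by
      rw [Real.mul_rpow (norm_nonneg _) hCnn, mul_comm]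
    rw [h7, h8] at h6
    exact h6

lemma j_holder (J : E → (E →L[ℝ] ℝ)) (hJ : ∀ x : E, J x x = ‖x‖ ^ 2)
    (hJn : ∀ x : E, ‖J x‖ = ‖x‖) {K q : ℝ} (hK : 0 < K) (hq1 : 1 < q) (hq2 : q ≤ 2)
    (hρ : ∀ τ > (0:ℝ), smoothnessModulus E τ ≤ K * τ ^ q)
    {R : ℝ} (hR : 0 < R) (x y : E) (hx : ‖x‖ ≤ R) (hy : ‖y‖ ≤ R) :
    ‖J x - J y‖ ≤ (R ^ (q / (q - 1) - 2) /
        (min (((4 * K) ^ (1 / (q - 1)))⁻¹ / 2) 1 / 2 ^ (q / (q - 1)))) ^ (q - 1)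
      * ‖x - y‖ ^ (q - 1) := by
  rcases le_total ‖y‖ ‖x‖ with hba | hba
  · exact j_holder_aux J hJ hJn hK hq1 hq2 hρ hR x y hx hy hba
  · have h := j_holder_aux J hJ hJn hK hq1 hq2 hρ hR y x hy hx hba
    rwa [norm_sub_rev (J y) (J x), norm_sub_rev y x] at h

end Stmt11Aux

open Stmt11Aux in
theorem stmt11 {E : Type*} [NormedAddCommGroup E] [NormedSpace ℝ E] [CompleteSpace E]
    (J : E → (E →L[ℝ] ℝ))
    (hJ : ∀ x : E, J x x = ‖x‖ ^ 2) (hJn : ∀ x : E, ‖J x‖ = ‖x‖)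
    (K q : ℝ) (hK : 0 < K) (hq1 : 1 < q) (hq2 : q ≤ 2)
    -- q-uniform smoothness
    (hρ : ∀ τ > (0:ℝ), smoothnessModulus E τ ≤ K * τ ^ q)
    -- 2-uniform convexity
    (h2uc : ∃ c > (0:ℝ), ∀ ε ∈ Ioc (0:ℝ) 2, c * ε ^ 2 ≤ convexityModulus E ε)
    (C : Set E) (hCne : C.Nonempty) (hCcl : IsClosed C) (hCcv : Convex ℝ C)
    -- monotone operator A ⊆ E × E* with D(A) ⊆ C
    (A : Set (E × (E →L[ℝ] ℝ)))
    (hmono : ∀ p ∈ A, ∀ p' ∈ A, 0 ≤ (p.2 - p'.2) (p.1 - p'.1))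
    (hDA : ∀ p ∈ A, p.1 ∈ C)
    (r : ℝ) (hr : 0 < r)
    -- range condition: the resolvent J_r = (J + rA)⁻¹J is defined on C
    (Jr : E → E)
    (hJr : ∀ x ∈ C, ∃ a : E →L[ℝ] ℝ, (Jr x, a) ∈ A ∧ J x = J (Jr x) + r • a) :
    ∀ R > (0:ℝ), ∃ L : ℝ, ∀ x ∈ C, ∀ y ∈ C, ‖x‖ ≤ R → ‖y‖ ≤ R →
      ‖Jr x - Jr y‖ ≤ L * ‖x - y‖ ^ (q - 1) := by

  intro R hR
  obtain ⟨c, hc, h2⟩ := h2uc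
  have hμpos : 0 < min c (1/2) := lt_min hc (by norm_num)
  set cR := (R ^ (q / (q - 1) - 2) /
      (min (((4 * K) ^ (1 / (q - 1)))⁻¹ / 2) 1 / 2 ^ (q / (q - 1)))) ^ (q - 1) with hcRdef
  have hq0 : (0:ℝ) < q - 1 := by linarith
  have hcRnn : 0 ≤ cR := by
    rw [hcRdef]
    apply Real.rpow_nonneg
    have hc2pos : 0 < (((4 * K) ^ (1 / (q - 1)))⁻¹ / 2) := by
      have := Real.rpow_pos_of_pos (show (0:ℝ) < 4 * K by linarith) (1 / (q - 1))
      positivity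
    have h2ppos : (0:ℝ) < 2 ^ (q / (q - 1)) := Real.rpow_pos_of_pos (by norm_num) _
    have : 0 < min (((4 * K) ^ (1 / (q - 1)))⁻¹ / 2) 1 / 2 ^ (q / (q - 1)) :=
      div_pos (lt_min hc2pos one_pos) h2ppos
    positivity
  refine ⟨cR / min c (1/2), ?_⟩
  intro x hx y hy hxR hyR
  obtain ⟨fa, hfaA, hfax⟩ := hJr x hx
  obtain ⟨fb, hfbA, hfby⟩ := hJr y hy
  set w := Jr x - Jr y with hwdef
  have hmono1 : min c (1/2) * ‖w‖ ^ 2 ≤ (J (Jr x) - J (Jr y)) w :=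
    strong_mono' J hJ hJn hc h2 (Jr x) (Jr y)
  have hAmono : 0 ≤ (fa - fb) w := by
    exact hmono (Jr x, fa) hfaA (Jr y, fb) hfbA
  have hdecomp : (J x - J y) w = (J (Jr x) - J (Jr y)) w + r * ((fa - fb) w) := by
    rw [hfax, hfby]
    simp only [ContinuousLinearMap.sub_apply, ContinuousLinearMap.add_apply,
      ContinuousLinearMap.coe_smul', Pi.smul_apply, smul_eq_mul]
    ring
  have hfirm : (J (Jr x) - J (Jr y)) w ≤ (J x - J y) w := by
    rw [hdecomp]
    nlinarith [mul_nonneg hr.le hAmono]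
  have hCS : (J x - J y) w ≤ ‖J x - J y‖ * ‖w‖ := apply_le _ _
  have hhol := j_holder J hJ hJn hK hq1 hq2 hρ hR x y hxR hyR
  rw [← hcRdef] at hhol
  have hrpnn : (0:ℝ) ≤ ‖x - y‖ ^ (q - 1) := Real.rpow_nonneg (norm_nonneg _) _
  rcases eq_or_lt_of_le (norm_nonneg w) with hw0 | hwpos
  · rw [← hw0]
    positivity
  · have hchain : min c (1/2) * ‖w‖ ^ 2 ≤ cR * ‖x - y‖ ^ (q - 1) * ‖w‖ := by
      calc min c (1/2) * ‖w‖ ^ 2 ≤ (J x - J y) w := le_trans hmono1 hfirm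
        _ ≤ ‖J x - J y‖ * ‖w‖ := hCS
        _ ≤ cR * ‖x - y‖ ^ (q - 1) * ‖w‖ :=
          mul_le_mul_of_nonneg_right hhol (norm_nonneg _)
    have hsq : min c (1/2) * ‖w‖ ^ 2 = (min c (1/2) * ‖w‖) * ‖w‖ := by ring
    rw [hsq] at hchain
    have h4 : min c (1/2) * ‖w‖ ≤ cR * ‖x - y‖ ^ (q - 1) :=
      le_of_mul_le_mul_right hchain hwpos
    rw [div_mul_eq_mul_div, le_div_iff₀ hμpos]
    linarith
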